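/- Let v ∈ ℝ^d be a fixed vector and let U be a d×b random matrix whose entries are independent standard normal random variables. Then for any 0 < δ < 1, with probability at least 1 − δ, ‖Uᵀv‖² ≥ (b − 2√(b·log(1/δ)))·‖v‖². -/

import Mathlib

open MeasureTheory ProbabilityTheory Matrix
open scoped BigOperators RealInnerProductSpace

noncomputable section

abbrev Vec (d : ℕ) := EuclideanSpace ℝ (Fin d)
abbrev Mat (d : ℕ) := Matrix (Fin d) (Fin d) ℝ

/-- View a Euclidean vector as a plain function. -/
def toPi {d : ℕ} (u : Vec d) : Fin d → ℝ := u
/-- View a plain function as a Euclidean vector. -/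
def ofPi {d : ℕ} (u : Fin d → ℝ) : Vec d := WithLp.toLp 2 u

/-- Matrix-vector multiplication on Euclidean space. -/
def mvec {d : ℕ} (A : Mat d) (u : Vec d) : Vec d := ofPi (A.mulVec (toPi u))

/-- The standard Gaussian measure N(0, I_d) on ℝ^d. -/
def gaussD (d : ℕ) : Measure (Vec d) :=
  (Measure.pi fun _ : Fin d => gaussianReal 0 1).map (MeasurableEquiv.toLp 2 (Fin d → ℝ))

/-- Frobenius norm of a matrix. -/
def matFrobNorm {m n : ℕ} (A : Matrix (Fin m) (Fin n) ℝ) : ℝ :=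
  Real.sqrt (∑ i, ∑ j, (A i j) ^ 2)

/-- Operator (spectral) norm of a matrix. -/
def matOpNorm {m n : ℕ} (A : Matrix (Fin m) (Fin n) ℝ) : ℝ :=
  ‖LinearMap.toContinuousLinearMap (Matrix.toEuclideanLin A)‖

/-- Loewner order `A ⪯ B`. -/
def loeLE {d : ℕ} (A B : Mat d) : Prop := (B - A).PosSemidef

/-- Hessian matrix of `f` at `x`. -/
def hess {d : ℕ} (f : Vec d → ℝ) (x : Vec d) : Mat d :=
  Matrix.of fun i j =>
    iteratedFDeriv ℝ 2 f x ![EuclideanSpace.single i 1, EuclideanSpace.single j 1]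

/-- Membership in `S = {Σ symmetric : ζ⁻¹ I ⪯ Σ ⪯ τ⁻¹ I}`. -/
def Smem {d : ℕ} (τ ζ : ℝ) (A : Mat d) : Prop :=
  A.IsSymm ∧ loeLE (ζ⁻¹ • 1) A ∧ loeLE A (τ⁻¹ • 1)

/-- Membership in `S' = {A symmetric : τ I ⪯ A ⪯ ζ I}`. -/
def S'mem {d : ℕ} (τ ζ : ℝ) (A : Mat d) : Prop :=
  A.IsSymm ∧ loeLE (τ • 1) A ∧ loeLE A (ζ • 1)

/-- Square root of a positive semidefinite matrix (the former `Matrix.PosSemidef.sqrt`). -/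
def psdSqrt {d : ℕ} {S : Mat d} (hS : S.PosSemidef) : Mat d :=
  hS.1.eigenvectorUnitary.1 * Matrix.diagonal ((↑) ∘ Real.sqrt ∘ hS.1.eigenvalues) *
    (star hS.1.eigenvectorUnitary : Mat d)

/-- The regularized reparameterized objective `Q_α(μ, Σ)`. -/
def Qa {d : ℕ} (f : Vec d → ℝ) (α : ℝ) (μ : Vec d) (S : Mat d) (hS : S.PosSemidef) : ℝ :=
  (∫ u, f (μ + α • mvec (psdSqrt hS) u) ∂ gaussD d) - α ^ 2 / 2 * Real.log S.det

section Aux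
open Real
open scoped ENNReal NNReal


-- log inequality
lemma log_ge_quad {u : ℝ} (hu : 0 ≤ u) : u - u ^ 2 / 2 ≤ Real.log (1 + u) := by
  set f : ℝ → ℝ := fun u => Real.log (1 + u) - u + u ^ 2 / 2 with hf
  have hder : ∀ x : ℝ, 0 < x → HasDerivAt f ((1 + x)⁻¹ - 1 + x) x := by
    intro x hx
    have h1 : HasDerivAt (fun y : ℝ => 1 + y) 1 x := (hasDerivAt_id x).const_add 1
    have h2 : HasDerivAt (fun y : ℝ => Real.log (1 + y)) ((1 + x)⁻¹ * 1) x :=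
      (Real.hasDerivAt_log (by positivity)).comp x h1
    have h3 : HasDerivAt (fun y : ℝ => y ^ 2 / 2) ((2 : ℕ) * x ^ 1 / 2) x :=
      (hasDerivAt_pow 2 x).div_const 2
    have := (h2.sub (hasDerivAt_id x)).add h3
    refine this.congr_deriv ?_
    push_cast; ring
  have hmono : MonotoneOn f (Set.Ici (0 : ℝ)) := by
    apply monotoneOn_of_deriv_nonneg (convex_Ici 0)
    · apply ContinuousOn.add (ContinuousOn.sub ?_ continuousOn_id)
      · exact (continuous_pow 2).continuousOn.div_const 2
      · apply ContinuousOn.log (continuousOn_const.add continuousOn_id)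
        intro x hx; simp only [Set.mem_Ici] at hx; exact ne_of_gt (by show (0:ℝ) < 1 + x; linarith)
    · intro x hx
      rw [interior_Ici] at hx
      exact (hder x (Set.mem_Ioi.mp hx)).differentiableAt.differentiableWithinAt
    · intro x hx
      rw [interior_Ici] at hx
      have hx' : (0:ℝ) < x := hx
      rw [(hder x hx').deriv]
      have h1 : (0:ℝ) < 1 + x := by positivity
      have h2 : (1 + x)⁻¹ - 1 + x = x ^ 2 / (1 + x) := by field_simp; ring
      rw [h2]; positivity
  have h0 : f 0 = 0 := by simp [hf]
  have := hmono (Set.self_mem_Ici) hu hu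
  rw [h0] at this
  simp only [hf] at this
  linarith

lemma integral_exp_neg_quad (A B C : ℝ) (hA : 0 < A) :
    ∫ x : ℝ, Real.exp (-(A * x ^ 2 + B * x + C)) =
      Real.sqrt (π / A) * Real.exp (B ^ 2 / (4 * A) - C) := by
  have h : ∀ x : ℝ, -(A * x ^ 2 + B * x + C)
      = -A * (x + B / (2 * A)) ^ 2 + (B ^ 2 / (4 * A) - C) := by
    intro x; field_simp; ring
  simp_rw [h, Real.exp_add, integral_mul_const]
  rw [integral_add_right_eq_self (fun x : ℝ => Real.exp (-A * x ^ 2)) (B / (2 * A))]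
  rw [integral_gaussian]

lemma gaussian_mgf_step (l c s : ℝ) (hl : 0 ≤ l) :
    ∫ x, Real.exp (-(l * (s + c * x) ^ 2)) ∂(gaussianReal 0 1)
      = (Real.sqrt (1 + 2 * l * c ^ 2))⁻¹ *
        Real.exp (-(l / (1 + 2 * l * c ^ 2) * s ^ 2)) := by
  have hP : (0:ℝ) < 1 + 2 * l * c ^ 2 := by positivity
  rw [gaussianReal_of_var_ne_zero 0 one_ne_zero]
  rw [show gaussianPDF 0 1 = fun x => ((gaussianPDFReal 0 1 x).toNNReal : ℝ≥0∞) from rfl]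
  rw [integral_withDensity_eq_integral_smul
    (by exact (measurable_gaussianPDFReal 0 1).real_toNNReal)]
  have hpdf : ∀ x : ℝ, ((gaussianPDFReal 0 1 x).toNNReal : ℝ) = (Real.sqrt (2 * π))⁻¹ * Real.exp (-(x ^ 2 / 2)) := by
    intro x
    rw [Real.coe_toNNReal _ (gaussianPDFReal_nonneg 0 1 x)]
    simp [gaussianPDFReal, neg_div]
  simp_rw [NNReal.smul_def, smul_eq_mul, hpdf, mul_assoc, ← Real.exp_add, integral_const_mul]
  have hexp : ∀ x : ℝ, -(x ^ 2 / 2) + -(l * (s + c * x) ^ 2)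
      = -((l * c ^ 2 + 1/2) * x ^ 2 + (2 * l * c * s) * x + l * s ^ 2) := by
    intro x; ring
  simp_rw [hexp]
  rw [integral_exp_neg_quad _ _ _ (by positivity)]
  have h2A : 2 * (l * c ^ 2 + 1/2) = 1 + 2 * l * c ^ 2 := by ring
  have hBAC : (2 * l * c * s) ^ 2 / (4 * (l * c ^ 2 + 1/2)) - l * s ^ 2
      = -(l / (1 + 2 * l * c ^ 2) * s ^ 2) := by
    field_simp
    ring
  rw [hBAC, ← mul_assoc]
  have key : (Real.sqrt (2 * π))⁻¹ * Real.sqrt (π / (l * c ^ 2 + 1/2))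
      = (Real.sqrt (1 + 2 * l * c ^ 2))⁻¹ := by
    rw [show π / (l * c ^ 2 + 1/2) = (2 * π) / (1 + 2 * l * c ^ 2) by
      rw [eq_div_iff (ne_of_gt hP)]; field_simp; ring]
    rw [Real.sqrt_div (by positivity : (0:ℝ) ≤ 2 * π)]
    have h1 : Real.sqrt (2 * π) ≠ 0 := by positivity
    field_simp
  rw [key]
  ring_nf

lemma integrable_of_le_one {α : Type*} [MeasurableSpace α] {μ : Measure α} [IsFiniteMeasure μ]
    {f : α → ℝ} (hm : Measurable f) (h0 : ∀ x, 0 ≤ f x) (h1 : ∀ x, f x ≤ 1) :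
    Integrable f μ :=
  Integrable.mono' (integrable_const 1) hm.aestronglyMeasurable
    (ae_of_all _ fun x => by rw [Real.norm_eq_abs, abs_of_nonneg (h0 x)]; exact h1 x)

lemma integral_pi_succ {E : Type*} [MeasurableSpace E] (μ : Measure E) [IsProbabilityMeasure μ]
    {n : ℕ} (f : (Fin (n + 1) → E) → ℝ) (hmeas : Measurable f)
    (h0 : ∀ x, 0 ≤ f x) (h1 : ∀ x, f x ≤ 1) :
    ∫ x, f x ∂(Measure.pi fun _ => μ)
      = ∫ y, ∫ x, f (Fin.insertNth 0 y x) ∂(Measure.pi fun _ : Fin n => μ) ∂μ := by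
  have hmp := measurePreserving_piFinSuccAbove (fun _ : Fin (n + 1) => μ) 0
  set e := MeasurableEquiv.piFinSuccAbove (fun _ : Fin (n + 1) => E) 0 with he
  have key := (hmp.symm e).integral_comp' f
  rw [← key]
  rw [integral_prod (fun p => f (e.symm p)) (integrable_of_le_one ((hmeas.comp e.symm.measurable))
    (fun p => h0 _) (fun p => h1 _))]
  have : ∀ (y : E) (x : Fin n → E), e.symm (y, x) = Fin.insertNth 0 y x := by
    intro y x
    simp [he, MeasurableEquiv.piFinSuccAbove, Fin.consEquiv]
  simp_rw [this]

lemma exp_term_nonneg (l q : ℝ) : 0 ≤ Real.exp (-(l * q ^ 2)) := (Real.exp_pos _).le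

lemma exp_term_le_one {l : ℝ} (hl : 0 ≤ l) (q : ℝ) : Real.exp (-(l * q ^ 2)) ≤ 1 := by
  rw [Real.exp_le_one_iff]
  have : 0 ≤ l * q ^ 2 := by positivity
  linarith

lemma gaussian_mgf_pi (l : ℝ) (hl : 0 ≤ l) :
    ∀ (n : ℕ) (w : Fin n → ℝ) (s : ℝ),
    ∫ x : Fin n → ℝ, Real.exp (-(l * (s + ∑ i, w i * x i) ^ 2))
        ∂(Measure.pi fun _ => gaussianReal 0 1)
      = (Real.sqrt (1 + 2 * l * ∑ i, w i ^ 2))⁻¹ *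
        Real.exp (-(l / (1 + 2 * l * ∑ i, w i ^ 2) * s ^ 2)) := by
  intro n
  induction n with
  | zero =>
      intro w s
      simp
  | succ n ih =>
      intro w s
      have hmeas : Measurable fun x : Fin (n+1) → ℝ =>
          Real.exp (-(l * (s + ∑ i, w i * x i) ^ 2)) := by
        apply Real.measurable_exp.comp
        apply Measurable.neg
        apply Measurable.const_mul
        apply Measurable.pow_const
        exact measurable_const.add (Finset.measurable_sum _ fun i _ =>
          by fun_prop)
      rw [integral_pi_succ (gaussianReal 0 1) _ hmeas
        (fun x => exp_term_nonneg _ _) (fun x => exp_term_le_one hl _)]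
      have hins : ∀ (y : ℝ) (x : Fin n → ℝ),
          (s + ∑ i, w i * (Fin.insertNth (α := fun _ : Fin (n+1) => ℝ) 0 y x) i)
            = (s + w 0 * y) + ∑ j, w (Fin.succ j) * x j := by
        intro y x
        rw [Fin.sum_univ_succAbove (fun i => w i * (Fin.insertNth (α := fun _ : Fin (n+1) => ℝ) 0 y x) i) 0]
        simp [Fin.insertNth_apply_same, Fin.insertNth_apply_succAbove, Fin.succAbove_zero]
        ring
      simp_rw [hins]
      have hIH : ∀ y : ℝ,
          ∫ x : Fin n → ℝ, Real.exp (-(l * ((s + w 0 * y) + ∑ j, w (Fin.succ j) * x j) ^ 2))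
            ∂(Measure.pi fun _ => gaussianReal 0 1)
          = (Real.sqrt (1 + 2 * l * ∑ j, w (Fin.succ j) ^ 2))⁻¹ *
            Real.exp (-(l / (1 + 2 * l * ∑ j, w (Fin.succ j) ^ 2) * (s + w 0 * y) ^ 2)) :=
        fun y => ih (fun j => w (Fin.succ j)) (s + w 0 * y)
      simp_rw [hIH, integral_const_mul]
      set Sg := ∑ j, w (Fin.succ j) ^ 2 with hSg
      have hSg0 : 0 ≤ Sg := Finset.sum_nonneg fun j _ => sq_nonneg _
      have hP : (0:ℝ) < 1 + 2 * l * Sg := by positivity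
      have hl' : 0 ≤ l / (1 + 2 * l * Sg) := by positivity
      have hstep := gaussian_mgf_step (l / (1 + 2 * l * Sg)) (w 0) s hl'
      rw [hstep]
      have hSg : ∑ i, w i ^ 2 = w 0 ^ 2 + Sg := by
        rw [Fin.sum_univ_succ]
      rw [hSg]
      set Q := 1 + 2 * l * (w 0 ^ 2 + Sg) with hQ
      have hQ0 : (0:ℝ) < Q := by positivity
      have h1 : 1 + 2 * (l / (1 + 2 * l * Sg)) * w 0 ^ 2 = Q / (1 + 2 * l * Sg) := by
        field_simp [hQ]; ring
      rw [h1]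
      have h2 : (l / (1 + 2 * l * Sg)) / (Q / (1 + 2 * l * Sg)) = l / Q := by
        rw [div_div_div_eq]
        rw [mul_comm l (1 + 2 * l * Sg), mul_div_mul_left _ _ hP.ne']
      have hPs : Real.sqrt (1 + 2 * l * Sg) ≠ 0 := by positivity
      have hQs : Real.sqrt Q ≠ 0 := by positivity
      rw [h2, Real.sqrt_div hQ0.le, inv_div, ← mul_assoc]
      congr 1
      field_simp




instance gaussD_prob (d : ℕ) : IsProbabilityMeasure (gaussD d) :=
  Measure.isProbabilityMeasure_map (MeasurableEquiv.toLp 2 (Fin d → ℝ)).measurable.aemeasurable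

lemma norm_sq_eq_sum {d : ℕ} (v : Vec d) : ‖v‖ ^ 2 = ∑ i, v i ^ 2 := by
  rw [EuclideanSpace.norm_eq, Real.sq_sqrt (by positivity)]
  simp [Real.norm_eq_abs, sq_abs]

lemma gaussD_mgf {d : ℕ} (v : Vec d) (l : ℝ) (hl : 0 ≤ l) :
    ∫ u, Real.exp (-(l * ⟪u, v⟫ ^ 2)) ∂(gaussD d)
      = (Real.sqrt (1 + 2 * l * ‖v‖ ^ 2))⁻¹ := by
  rw [gaussD, MeasureTheory.integral_map_equiv]
  have h1 : ∀ x : Fin d → ℝ,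
      ⟪((MeasurableEquiv.toLp 2 (Fin d → ℝ)) x : Vec d), v⟫
        = (0 : ℝ) + ∑ i, v i * x i := by
    intro x
    rw [zero_add, PiLp.inner_apply]
    refine Finset.sum_congr rfl fun i _ => ?_
    have hx : ((MeasurableEquiv.toLp 2 (Fin d → ℝ)) x : Vec d) i = x i := rfl
    rw [hx, RCLike.inner_apply, mul_comm]
    simp [mul_comm]
  simp_rw [h1]
  rw [gaussian_mgf_pi l hl d v 0]
  rw [norm_sq_eq_sum]
  simp

lemma integral_pi_pow {E : Type*} [MeasurableSpace E] (μ : Measure E) [IsProbabilityMeasure μ]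
    (g : E → ℝ) (hm : Measurable g) (h0 : ∀ x, 0 ≤ g x) (h1 : ∀ x, g x ≤ 1) :
    ∀ n : ℕ, ∫ x : Fin n → E, ∏ i, g (x i) ∂(Measure.pi fun _ => μ) = (∫ x, g x ∂μ) ^ n := by
  intro n
  induction n with
  | zero => simp
  | succ n ih =>
      have hmeas : Measurable fun x : Fin (n+1) → E => ∏ i, g (x i) :=
        Finset.measurable_prod _ fun i _ => hm.comp (measurable_pi_apply i)
      rw [integral_pi_succ μ _ hmeas
        (fun x => Finset.prod_nonneg fun i _ => h0 _)
        (fun x => Finset.prod_le_one (fun i _ => h0 _) (fun i _ => h1 _))]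
      have hins : ∀ (y : E) (x : Fin n → E),
          ∏ i, g ((Fin.insertNth (α := fun _ : Fin (n+1) => E) 0 y x) i)
            = g y * ∏ j, g (x j) := by
        intro y x
        rw [Fin.prod_univ_succAbove (fun i => g ((Fin.insertNth (α := fun _ : Fin (n+1) => E) 0 y x) i)) 0]
        simp [Fin.insertNth_apply_same, Fin.insertNth_apply_succAbove]
      simp_rw [hins, integral_const_mul, ih, integral_mul_const, pow_succ]
      ring

lemma inner_meas {d : ℕ} (v : Vec d) : Measurable fun u : Vec d => (⟪u, v⟫ : ℝ) :=
  (continuous_id.inner continuous_const).measurable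

lemma sum_inner_sq_meas {d b : ℕ} (v : Vec d) :
    Measurable fun U : Fin b → Vec d => ∑ i, (⟪U i, v⟫ : ℝ) ^ 2 :=
  Finset.measurable_sum _ fun i _ =>
    ((inner_meas v).comp (measurable_pi_apply i)).pow_const 2

lemma chernoff {d b : ℕ} (v : Vec d) (l : ℝ) (hl : 0 ≤ l) (a : ℝ) :
    (Measure.pi fun _ : Fin b => gaussD d) {U | ∑ i, (⟪U i, v⟫ : ℝ) ^ 2 < a}
      ≤ ENNReal.ofReal (Real.exp (l * a) *
          ((Real.sqrt (1 + 2 * l * ‖v‖ ^ 2))⁻¹) ^ b) := by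
  have hYmeas : Measurable fun U : Fin b → Vec d =>
      Real.exp (-(l * ∑ i, (⟪U i, v⟫ : ℝ) ^ 2)) :=
    Real.measurable_exp.comp ((sum_inner_sq_meas v).const_mul l).neg
  have hY0 : ∀ U : Fin b → Vec d, 0 ≤ Real.exp (-(l * ∑ i, (⟪U i, v⟫ : ℝ) ^ 2)) :=
    fun U => (Real.exp_pos _).le
  have hY1 : ∀ U : Fin b → Vec d, Real.exp (-(l * ∑ i, (⟪U i, v⟫ : ℝ) ^ 2)) ≤ 1 := by
    intro U
    rw [Real.exp_le_one_iff]
    have h0 : 0 ≤ ∑ i, (⟪U i, v⟫ : ℝ) ^ 2 := Finset.sum_nonneg fun i _ => sq_nonneg _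
    have := mul_nonneg hl h0
    linarith
  have hint : Integrable (fun U : Fin b → Vec d =>
      Real.exp (-(l * ∑ i, (⟪U i, v⟫ : ℝ) ^ 2))) (Measure.pi fun _ : Fin b => gaussD d) :=
    integrable_of_le_one hYmeas hY0 hY1
  have hI : ∫ U : Fin b → Vec d, Real.exp (-(l * ∑ i, (⟪U i, v⟫ : ℝ) ^ 2))
        ∂(Measure.pi fun _ : Fin b => gaussD d)
      = ((Real.sqrt (1 + 2 * l * ‖v‖ ^ 2))⁻¹) ^ b := by
    have hYeq : ∀ U : Fin b → Vec d, Real.exp (-(l * ∑ i, (⟪U i, v⟫ : ℝ) ^ 2))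
        = ∏ i, Real.exp (-(l * (⟪U i, v⟫ : ℝ) ^ 2)) := by
      intro U
      rw [← Real.exp_sum]
      congr 1
      rw [Finset.mul_sum, ← Finset.sum_neg_distrib]
    simp_rw [hYeq]
    rw [integral_pi_pow (gaussD d) (fun u => Real.exp (-(l * (⟪u, v⟫ : ℝ) ^ 2)))
      (Real.measurable_exp.comp (((inner_meas v).pow_const 2).const_mul l).neg)
      (fun u => (Real.exp_pos _).le) (fun u => exp_term_le_one hl _) b,
      gaussD_mgf v l hl]
  have hsub : {U : Fin b → Vec d | ∑ i, (⟪U i, v⟫ : ℝ) ^ 2 < a}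
      ⊆ {U | Real.exp (-(l * a)) ≤ Real.exp (-(l * ∑ i, (⟪U i, v⟫ : ℝ) ^ 2))} := by
    intro U hU
    simp only [Set.mem_setOf_eq] at hU ⊢
    apply Real.exp_le_exp.mpr
    have : l * ∑ i, (⟪U i, v⟫ : ℝ) ^ 2 ≤ l * a := mul_le_mul_of_nonneg_left hU.le hl
    linarith
  have hmark := mul_meas_ge_le_integral_of_nonneg (ae_of_all _ hY0) hint (Real.exp (-(l * a)))
  have hε : (0:ℝ) < Real.exp (-(l * a)) := Real.exp_pos _
  set T := {U : Fin b → Vec d |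
    Real.exp (-(l * a)) ≤ Real.exp (-(l * ∑ i, (⟪U i, v⟫ : ℝ) ^ 2))} with hT
  have hfin : (Measure.pi fun _ : Fin b => gaussD d) T ≠ ⊤ := measure_ne_top _ _
  have h2 : (Measure.pi fun _ : Fin b => gaussD d) T
      ≤ ENNReal.ofReal (Real.exp (l * a) * ((Real.sqrt (1 + 2 * l * ‖v‖ ^ 2))⁻¹) ^ b) := by
    rw [ENNReal.le_ofReal_iff_toReal_le hfin (by positivity)]
    rw [hI] at hmark
    calc ((Measure.pi fun _ : Fin b => gaussD d) T).toReal
        ≤ ((Real.sqrt (1 + 2 * l * ‖v‖ ^ 2))⁻¹) ^ b / Real.exp (-(l * a)) := by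
          rw [le_div_iff₀ hε, mul_comm]
          exact hmark
      _ = _ := by
          rw [Real.exp_neg, div_inv_eq_mul, mul_comm]
  exact le_trans (measure_mono hsub) h2

lemma chernoff_numeric {b : ℕ} (hb : 1 ≤ b) {δ : ℝ} (hδ0 : 0 < δ) (hδ1 : δ < 1) :
    Real.exp (Real.sqrt (Real.log (1/δ) / b) * ((b:ℝ) - 2 * Real.sqrt (b * Real.log (1/δ)))) *
      ((Real.sqrt (1 + 2 * Real.sqrt (Real.log (1/δ) / b)))⁻¹) ^ b ≤ δ := by
  have hbpos : (0:ℝ) < b := by exact_mod_cast hb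
  set t := Real.log (1/δ) with htdef
  have ht : 0 < t := Real.log_pos (one_lt_one_div hδ0 hδ1)
  set κ := Real.sqrt (t / b) with hκdef
  have hκ : 0 < κ := Real.sqrt_pos.mpr (by positivity)
  have hκ2 : κ ^ 2 = t / b := Real.sq_sqrt (by positivity)
  have hbt : κ * Real.sqrt (b * t) = t := by
    rw [hκdef, ← Real.sqrt_mul (by positivity) (b * t)]
    have hbne : (b:ℝ) ≠ 0 := hbpos.ne'
    rw [show t / b * (b * t) = t ^ 2 by field_simp]
    exact Real.sqrt_sq ht.le
  have h1p : (0:ℝ) < 1 + 2 * κ := by positivity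
  have hL := log_ge_quad (u := 2 * κ) (by positivity)
  have hMpow : ((Real.sqrt (1 + 2 * κ))⁻¹) ^ b
      = Real.exp ((b : ℝ) * (-(Real.log (1 + 2 * κ) / 2))) := by
    rw [Real.exp_nat_mul, ← Real.log_sqrt h1p.le, ← Real.log_inv, Real.exp_log
      (inv_pos.mpr (Real.sqrt_pos.mpr h1p))]
  rw [hMpow, ← Real.exp_add]
  rw [← Real.exp_log hδ0]
  apply Real.exp_le_exp.mpr
  have hlogδ : Real.log δ = -t := by
    rw [htdef, one_div, Real.log_inv]; ring
  rw [hlogδ]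
  have hbk2 : (b:ℝ) * κ ^ 2 = t := by rw [hκ2]; field_simp
  have hmul := mul_le_mul_of_nonneg_left hL (by positivity : (0:ℝ) ≤ (b:ℝ) / 2)
  nlinarith [hmul, hbt, hbk2]

end Aux

/-- for a fixed `v ∈ ℝ^d` and a `d×b` matrix `U` with i.i.d. standard
normal entries (equivalently, i.i.d. standard Gaussian columns `u₁, …, u_b`), with
probability at least `1 − δ` one has `‖Uᵀv‖² ≥ (b − 2√(b log(1/δ)))‖v‖²`. -/
theorem stmt9 {d b : ℕ} (hd : 1 ≤ d) (hb : 1 ≤ b) (v : Vec d)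
    (δ : ℝ) (hδ0 : 0 < δ) (hδ1 : δ < 1) :
    ENNReal.ofReal (1 - δ)
      ≤ (Measure.pi fun _ : Fin b => gaussD d)
          {U : Fin b → Vec d |
            ((b : ℝ) - 2 * Real.sqrt ((b : ℝ) * Real.log (1 / δ))) * ‖v‖ ^ 2
              ≤ ∑ i, ⟪U i, v⟫ ^ 2} := by
  classical
  have hbpos : (0:ℝ) < b := by exact_mod_cast hb
  set coef := (b : ℝ) - 2 * Real.sqrt ((b : ℝ) * Real.log (1 / δ)) with hcoef
  set μ := (Measure.pi fun _ : Fin b => gaussD d) with hμ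
  by_cases ha : coef * ‖v‖ ^ 2 ≤ 0
  · have hG : {U : Fin b → Vec d | coef * ‖v‖ ^ 2 ≤ ∑ i, (⟪U i, v⟫ : ℝ) ^ 2} = Set.univ := by
      ext U
      simp only [Set.mem_setOf_eq, Set.mem_univ, iff_true]
      exact le_trans ha (Finset.sum_nonneg fun i _ => sq_nonneg _)
    rw [hG, measure_univ]
    exact ENNReal.ofReal_le_one.mpr (by linarith)
  · push_neg at ha
    have hcoefpos : 0 < coef := by
      rcases mul_pos_iff.mp ha with ⟨h1, _⟩ | ⟨_, h2⟩
      · exact h1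
      · exact absurd h2 (not_lt.mpr (sq_nonneg _))
    have hv2 : 0 < ‖v‖ ^ 2 := by
      rcases mul_pos_iff.mp ha with ⟨_, h2⟩ | ⟨h1, _⟩
      · exact h2
      · exact absurd (lt_trans h1 hcoefpos) (lt_irrefl _)
    set t := Real.log (1 / δ) with htdef
    have ht : 0 < t := Real.log_pos (one_lt_one_div hδ0 hδ1)
    set κ := Real.sqrt (t / b) with hκdef
    have hκ : 0 < κ := Real.sqrt_pos.mpr (by positivity)
    set l := κ / ‖v‖ ^ 2 with hldef
    have hl : 0 ≤ l := by positivity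
    have hlv : l * ‖v‖ ^ 2 = κ := by
      rw [hldef]; exact div_mul_cancel₀ _ hv2.ne'
    have hch := chernoff (b := b) v l hl (coef * ‖v‖ ^ 2)
    have hb1 : 1 + 2 * l * ‖v‖ ^ 2 = 1 + 2 * κ := by rw [mul_assoc, hlv]
    rw [hb1] at hch
    have harg : l * (coef * ‖v‖ ^ 2) = κ * coef := by
      rw [hldef, div_mul_eq_mul_div, ← mul_assoc, mul_div_assoc, div_self hv2.ne', mul_one]
    rw [harg] at hch
    have hnum := chernoff_numeric hb hδ0 hδ1
    rw [← htdef, ← hκdef, ← hcoef] at hnum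
    have hB : μ {U : Fin b → Vec d | ∑ i, (⟪U i, v⟫ : ℝ) ^ 2 < coef * ‖v‖ ^ 2}
        ≤ ENNReal.ofReal δ :=
      le_trans hch (ENNReal.ofReal_le_ofReal hnum)
    have hBmeas : MeasurableSet
        {U : Fin b → Vec d | ∑ i, (⟪U i, v⟫ : ℝ) ^ 2 < coef * ‖v‖ ^ 2} :=
      measurableSet_lt (sum_inner_sq_meas v) measurable_const
    have hGc : {U : Fin b → Vec d | coef * ‖v‖ ^ 2 ≤ ∑ i, (⟪U i, v⟫ : ℝ) ^ 2}
        = {U : Fin b → Vec d | ∑ i, (⟪U i, v⟫ : ℝ) ^ 2 < coef * ‖v‖ ^ 2}ᶜ := by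
      ext U
      simp [not_lt]
    rw [hGc, prob_compl_eq_one_sub hBmeas]
    calc ENNReal.ofReal (1 - δ) = 1 - ENNReal.ofReal δ := by
          rw [ENNReal.ofReal_sub _ hδ0.le, ENNReal.ofReal_one]
      _ ≤ 1 - μ {U : Fin b → Vec d | ∑ i, (⟪U i, v⟫ : ℝ) ^ 2 < coef * ‖v‖ ^ 2} :=
          tsub_le_tsub_left hB 1
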